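/- Let A{_τ×_σ}B be a smash biproduct bialgebra with σ right conormal, and let R = Σ R¹⊗R²⊗R³⊗R⁴ ∈ (A⊗B)⊗(A⊗B) be a quasitriangular structure. Then Σ a_τ R¹ε_B(R²) ⊗ ε_A(R³)1_{Bτ}R⁴ = Σ R¹a_σε_B(R²_σ) ⊗ ε_A(R³)R⁴ for all a∈A, where on the left τ is applied to a⊗1_B (yielding 1_{Bτ}⊗a_τ) and on the right σ is applied to R²⊗a. -/

import Mathlib

open TensorProduct

noncomputable section

variable (k : Type*) [Field k]

/-- Componentwise multiplication on `H ⊗ H` induced by a multiplication map `m` on `H`. -/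
def mul2 (H : Type*) [AddCommGroup H] [Module k H] (m : H ⊗[k] H →ₗ[k] H) :
    (H ⊗[k] H) ⊗[k] (H ⊗[k] H) →ₗ[k] H ⊗[k] H :=
  (TensorProduct.map m m) ∘ₗ (TensorProduct.tensorTensorTensorComm k H H H H).toLinearMap

/-- Componentwise multiplication on `H ⊗ (H ⊗ H)`. -/
def mul3 (H : Type*) [AddCommGroup H] [Module k H] (m : H ⊗[k] H →ₗ[k] H) :
    (H ⊗[k] (H ⊗[k] H)) ⊗[k] (H ⊗[k] (H ⊗[k] H)) →ₗ[k] H ⊗[k] (H ⊗[k] H) :=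
  (TensorProduct.map m (mul2 k H m)) ∘ₗ
    (TensorProduct.tensorTensorTensorComm k H (H ⊗[k] H) H (H ⊗[k] H)).toLinearMap

/-- `R ∈ H ⊗ H` is a quasitriangular structure with respect to the bialgebra
structure data `(m, Δ, e, ε)` on `H`:
(QT1) `(ε⊗id)(R) = e = (id⊗ε)(R)`, (QT2) `(Δ⊗id)(R) = R₁₃R₂₃`,
(QT3) `(id⊗Δ)(R) = R₁₃R₁₂`, (QT4) `RΔ(h) = Δᶜᵒᵖ(h)R`. -/
def IsQT (H : Type*) [AddCommGroup H] [Module k H]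
    (m : H ⊗[k] H →ₗ[k] H) (Δ : H →ₗ[k] H ⊗[k] H) (e : H) (ε : H →ₗ[k] k)
    (R : H ⊗[k] H) : Prop :=
  (TensorProduct.lid k H) ((LinearMap.rTensor H ε) R) = e ∧
  (TensorProduct.rid k H) ((LinearMap.lTensor H ε) R) = e ∧
  (TensorProduct.assoc k H H H).toLinearMap ((LinearMap.rTensor H Δ) R) =
    mul3 k H m (((LinearMap.lTensor H (TensorProduct.mk k H H e)) R) ⊗ₜ[k] (e ⊗ₜ[k] R)) ∧
  (LinearMap.lTensor H Δ) R =
    mul3 k H m (((LinearMap.lTensor H (TensorProduct.mk k H H e)) R) ⊗ₜ[k]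
      ((LinearMap.lTensor H ((TensorProduct.mk k H H).flip e)) R)) ∧
  ∀ h : H, mul2 k H m (R ⊗ₜ[k] Δ h) =
    mul2 k H m ((TensorProduct.comm k H H (Δ h)) ⊗ₜ[k] R)

variable (A B : Type*)
  [Ring A] [Algebra k A] [Coalgebra k A]
  [Ring B] [Algebra k B] [Coalgebra k B]

variable (σ : B ⊗[k] A →ₗ[k] A ⊗[k] B) (τ : A ⊗[k] B →ₗ[k] B ⊗[k] A)

/-- The smash product multiplication `(a⊗b)(a'⊗b') = Σ aa'_σ ⊗ b_σ b'` on `A ⊗ B`. -/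
def smashMul : (A ⊗[k] B) ⊗[k] (A ⊗[k] B) →ₗ[k] A ⊗[k] B :=
  (TensorProduct.map (LinearMap.mul' k A) (LinearMap.mul' k B))
    ∘ₗ (TensorProduct.assoc k A A (B ⊗[k] B)).symm.toLinearMap
    ∘ₗ (TensorProduct.map LinearMap.id
         ((TensorProduct.assoc k A B B).toLinearMap
           ∘ₗ (TensorProduct.map σ LinearMap.id)
           ∘ₗ (TensorProduct.assoc k B A B).symm.toLinearMap))
    ∘ₗ (TensorProduct.assoc k A B (A ⊗[k] B)).toLinearMap

/-- The smash coproduct comultiplication `Δ(a⊗b) = Σ a₍₁₎ ⊗ b₍₁₎τ ⊗ a₍₂₎τ ⊗ b₍₂₎` on `A ⊗ B`. -/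
def smashComul : A ⊗[k] B →ₗ[k] (A ⊗[k] B) ⊗[k] (A ⊗[k] B) :=
  (TensorProduct.assoc k A B (A ⊗[k] B)).symm.toLinearMap
    ∘ₗ (TensorProduct.map LinearMap.id
         ((TensorProduct.assoc k B A B).toLinearMap
           ∘ₗ (TensorProduct.map τ LinearMap.id)
           ∘ₗ (TensorProduct.assoc k A B B).symm.toLinearMap))
    ∘ₗ (TensorProduct.assoc k A A (B ⊗[k] B)).toLinearMap
    ∘ₗ (TensorProduct.map (Coalgebra.comul : A →ₗ[k] A ⊗[k] A)
          (Coalgebra.comul : B →ₗ[k] B ⊗[k] B))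

/-- The counit `ε_A ⊗ ε_B` of `A ⊗ B`. -/
def smashCounit : A ⊗[k] B →ₗ[k] k :=
  (LinearMap.mul' k k) ∘ₗ
    TensorProduct.map (Coalgebra.counit : A →ₗ[k] k) (Coalgebra.counit : B →ₗ[k] k)

/-- The projection `π_A = id_A ⊗ ε_B`. -/
def piA : A ⊗[k] B →ₗ[k] A :=
  (TensorProduct.rid k A).toLinearMap ∘ₗ LinearMap.lTensor A (Coalgebra.counit : B →ₗ[k] k)

/-- The projection `π_B = ε_A ⊗ id_B`. -/
def piB : A ⊗[k] B →ₗ[k] B :=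
  (TensorProduct.lid k B).toLinearMap ∘ₗ LinearMap.rTensor B (Coalgebra.counit : A →ₗ[k] k)

/-- `A {_τ×_σ} B` is a smash biproduct bialgebra. -/
structure IsSmashBiproduct : Prop where
  mul_assoc : ∀ x y z : A ⊗[k] B,
    smashMul k A B σ ((smashMul k A B σ (x ⊗ₜ[k] y)) ⊗ₜ[k] z)
      = smashMul k A B σ (x ⊗ₜ[k] (smashMul k A B σ (y ⊗ₜ[k] z)))
  one_mul : ∀ x : A ⊗[k] B, smashMul k A B σ (((1:A) ⊗ₜ[k] (1:B)) ⊗ₜ[k] x) = x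
  mul_one : ∀ x : A ⊗[k] B, smashMul k A B σ (x ⊗ₜ[k] ((1:A) ⊗ₜ[k] (1:B))) = x
  sigma_one_left : ∀ b : B, σ (b ⊗ₜ[k] (1:A)) = (1:A) ⊗ₜ[k] b
  sigma_one_right : ∀ a : A, σ ((1:B) ⊗ₜ[k] a) = a ⊗ₜ[k] (1:B)
  comul_coassoc : ∀ x : A ⊗[k] B,
    (TensorProduct.assoc k (A ⊗[k] B) (A ⊗[k] B) (A ⊗[k] B)).toLinearMap
        ((LinearMap.rTensor (A ⊗[k] B) (smashComul k A B τ)) (smashComul k A B τ x))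
      = (LinearMap.lTensor (A ⊗[k] B) (smashComul k A B τ)) (smashComul k A B τ x)
  counit_comul : ∀ x : A ⊗[k] B,
    (TensorProduct.lid k (A ⊗[k] B))
        ((LinearMap.rTensor (A ⊗[k] B) (smashCounit k A B)) (smashComul k A B τ x)) = x
  comul_counit : ∀ x : A ⊗[k] B,
    (TensorProduct.rid k (A ⊗[k] B))
        ((LinearMap.lTensor (A ⊗[k] B) (smashCounit k A B)) (smashComul k A B τ x)) = x
  tau_counit_left : ∀ (a : A) (b : B),
    (TensorProduct.lid k A)
        ((LinearMap.rTensor A (Coalgebra.counit : B →ₗ[k] k)) (τ (a ⊗ₜ[k] b)))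
      = (Coalgebra.counit : B →ₗ[k] k) b • a
  tau_counit_right : ∀ (a : A) (b : B),
    (TensorProduct.rid k B)
        ((LinearMap.lTensor B (Coalgebra.counit : A →ₗ[k] k)) (τ (a ⊗ₜ[k] b)))
      = (Coalgebra.counit : A →ₗ[k] k) a • b
  comul_mul : ∀ x y : A ⊗[k] B,
    smashComul k A B τ (smashMul k A B σ (x ⊗ₜ[k] y))
      = mul2 k (A ⊗[k] B) (smashMul k A B σ)
          ((smashComul k A B τ x) ⊗ₜ[k] (smashComul k A B τ y))
  comul_one : smashComul k A B τ ((1:A) ⊗ₜ[k] (1:B))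
      = ((1:A) ⊗ₜ[k] (1:B)) ⊗ₜ[k] ((1:A) ⊗ₜ[k] (1:B))
  counit_mul : ∀ x y : A ⊗[k] B,
    smashCounit k A B (smashMul k A B σ (x ⊗ₜ[k] y)) = smashCounit k A B x * smashCounit k A B y
  counit_one : smashCounit k A B ((1:A) ⊗ₜ[k] (1:B)) = 1

/-- `σ` is right conormal: `(ε_A ⊗ id_B) ∘ σ = id_B ⊗ ε_A`. -/
def RightConormal : Prop := ∀ (b : B) (a : A),
  (TensorProduct.lid k B)
      ((LinearMap.rTensor B (Coalgebra.counit : A →ₗ[k] k)) (σ (b ⊗ₜ[k] a)))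
    = (Coalgebra.counit : A →ₗ[k] k) a • b

/-- `σ` is left conormal: `(id_A ⊗ ε_B) ∘ σ = ε_B ⊗ id_A`. -/
def LeftConormal : Prop := ∀ (b : B) (a : A),
  (TensorProduct.rid k A)
      ((LinearMap.lTensor A (Coalgebra.counit : B →ₗ[k] k)) (σ (b ⊗ₜ[k] a)))
    = (Coalgebra.counit : B →ₗ[k] k) b • a

/-- `τ` is left normal: `τ(a ⊗ 1_B) = 1_B ⊗ a`. -/
def LeftNormal : Prop := ∀ a : A, τ (a ⊗ₜ[k] (1:B)) = (1:B) ⊗ₜ[k] a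

/-- `τ` is right normal: `τ(1_A ⊗ b) = b ⊗ 1_A`. -/
def RightNormal : Prop := ∀ b : B, τ ((1:A) ⊗ₜ[k] b) = b ⊗ₜ[k] (1:A)

set_option linter.unusedSectionVars false
set_option synthInstance.maxHeartbeats 1000000
set_option maxHeartbeats 4000000

section Helpers
variable {k : Type*} [Field k]
variable {A B : Type*}
  [Ring A] [Algebra k A] [Coalgebra k A]
  [Ring B] [Algebra k B] [Coalgebra k B]
variable {σ : B ⊗[k] A →ₗ[k] A ⊗[k] B} {τ : A ⊗[k] B →ₗ[k] B ⊗[k] A}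

lemma mul2_tmul (H : Type*) [AddCommGroup H] [Module k H] (m : H ⊗[k] H →ₗ[k] H)
    (p q r s : H) :
    mul2 k H m ((p ⊗ₜ[k] q) ⊗ₜ[k] (r ⊗ₜ[k] s)) = m (p ⊗ₜ[k] r) ⊗ₜ[k] m (q ⊗ₜ[k] s) := by
  simp [mul2, TensorProduct.tensorTensorTensorComm_tmul]

lemma piA_tmul (a : A) (b : B) :
    piA k A B (a ⊗ₜ[k] b) = (Coalgebra.counit : B →ₗ[k] k) b • a := by
  simp [piA]

lemma piB_tmul (a : A) (b : B) :
    piB k A B (a ⊗ₜ[k] b) = (Coalgebra.counit : A →ₗ[k] k) a • b := by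
  simp [piB]

lemma smashMul_tmul (σ : B ⊗[k] A →ₗ[k] A ⊗[k] B) (a a' : A) (b b' : B) :
    smashMul k A B σ ((a ⊗ₜ[k] b) ⊗ₜ[k] (a' ⊗ₜ[k] b')) =
      TensorProduct.map (LinearMap.mulLeft k a) (LinearMap.mulRight k b') (σ (b ⊗ₜ[k] a')) := by
  simp only [smashMul, LinearMap.coe_comp, Function.comp_apply, LinearEquiv.coe_coe,
    TensorProduct.assoc_tmul, TensorProduct.map_tmul, LinearMap.id_coe, id_eq,
    TensorProduct.assoc_symm_tmul]
  generalize σ (b ⊗ₜ[k] a') = t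
  induction t using TensorProduct.induction_on with
  | zero => simp
  | tmul c d => simp [LinearMap.mul'_apply]
  | add u v hu hv => simp only [map_add, TensorProduct.tmul_add, TensorProduct.add_tmul,
      hu, hv]
end Helpers
section Helpers2
variable {k : Type*} [Field k]
variable {A B : Type*}
  [Ring A] [Algebra k A] [Coalgebra k A]
  [Ring B] [Algebra k B] [Coalgebra k B]

lemma comul_core_aux (x : A) (q : B) (t : B ⊗[k] A) :
    (TensorProduct.assoc k A B (A ⊗[k] B)).symm
        (x ⊗ₜ[k] (TensorProduct.assoc k B A B) (t ⊗ₜ[k] q))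
      = TensorProduct.map (TensorProduct.mk k A B x)
          ((TensorProduct.mk k A B).flip q) t := by
  induction t using TensorProduct.induction_on with
  | zero => simp
  | tmul u v => simp
  | add u v hu hv => simp only [map_add, TensorProduct.tmul_add, TensorProduct.add_tmul, hu, hv]

lemma smashComul_repr (τ : A ⊗[k] B →ₗ[k] B ⊗[k] A) (a : A) (b : B)
    {ι ι' : Type*} (ra : Coalgebra.Repr k a ι) (rb : Coalgebra.Repr k b ι') :
    smashComul k A B τ (a ⊗ₜ[k] b) =
      ∑ i ∈ ra.index, ∑ j ∈ rb.index,
        TensorProduct.map (TensorProduct.mk k A B (ra.left i))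
          ((TensorProduct.mk k A B).flip (rb.right j))
          (τ (ra.right i ⊗ₜ[k] rb.left j)) := by
  simp only [smashComul, LinearMap.coe_comp, Function.comp_apply, LinearEquiv.coe_coe,
    TensorProduct.map_tmul]
  rw [show (Coalgebra.comul : A →ₗ[k] A ⊗[k] A) a = ∑ i ∈ ra.index, ra.left i ⊗ₜ[k] ra.right i
      from ra.eq.symm,
    show (Coalgebra.comul : B →ₗ[k] B ⊗[k] B) b = ∑ j ∈ rb.index, rb.left j ⊗ₜ[k] rb.right j
      from rb.eq.symm]
  rw [TensorProduct.sum_tmul]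
  rw [map_sum, map_sum, map_sum]
  refine Finset.sum_congr rfl fun i _ => ?_
  rw [TensorProduct.tmul_sum]
  rw [map_sum, map_sum, map_sum]
  refine Finset.sum_congr rfl fun j _ => ?_
  simp only [TensorProduct.assoc_tmul, TensorProduct.map_tmul, LinearMap.id_coe, id_eq,
    TensorProduct.assoc_symm_tmul, LinearMap.coe_comp, Function.comp_apply, LinearEquiv.coe_coe]
  exact comul_core_aux _ _ _
end Helpers2
section Helpers3
variable {k : Type*} [Field k]
variable {A B : Type*}
  [Ring A] [Algebra k A] [Coalgebra k A]
  [Ring B] [Algebra k B] [Coalgebra k B]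

/-- π_A of a smash product, assuming ε_B is twist-multiplicative. -/
lemma piA_map_mul
    (hf : ∀ x y : B, (Coalgebra.counit : B →ₗ[k] k) (x * y)
      = (Coalgebra.counit : A →ₗ[k] k) (1:A)
          * ((Coalgebra.counit : B →ₗ[k] k) x * (Coalgebra.counit : B →ₗ[k] k) y))
    (r : A) (b' : B) (t : A ⊗[k] B) :
    piA k A B (TensorProduct.map (LinearMap.mulLeft k r) (LinearMap.mulRight k b') t)
      = ((Coalgebra.counit : A →ₗ[k] k) (1:A) * (Coalgebra.counit : B →ₗ[k] k) b')
          • (r * piA k A B t) := by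
  induction t using TensorProduct.induction_on with
  | zero => simp
  | tmul c d =>
      simp only [TensorProduct.map_tmul, LinearMap.mulLeft_apply, LinearMap.mulRight_apply,
        piA_tmul, hf]
      rw [mul_smul_comm, smul_smul]
      congr 1
      ring
  | add u v hu hv => simp only [map_add, hu, hv, mul_add, smul_add]

/-- π_B of a smash product, assuming ε_A is twist-multiplicative. -/
lemma piB_map_mul
    (he : ∀ x y : A, (Coalgebra.counit : A →ₗ[k] k) (x * y)
      = (Coalgebra.counit : B →ₗ[k] k) (1:B)
          * ((Coalgebra.counit : A →ₗ[k] k) x * (Coalgebra.counit : A →ₗ[k] k) y))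
    (r : A) (b' : B) (t : A ⊗[k] B) :
    piB k A B (TensorProduct.map (LinearMap.mulLeft k r) (LinearMap.mulRight k b') t)
      = ((Coalgebra.counit : B →ₗ[k] k) (1:B) * (Coalgebra.counit : A →ₗ[k] k) r)
          • (piB k A B t * b') := by
  induction t using TensorProduct.induction_on with
  | zero => simp
  | tmul c d =>
      simp only [TensorProduct.map_tmul, LinearMap.mulLeft_apply, LinearMap.mulRight_apply,
        piB_tmul, he]
      rw [smul_mul_assoc, smul_smul]
      congr 1
      ring
  | add u v hu hv => simp only [map_add, hu, hv, add_mul, smul_add]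

/-- auxiliary collapse: `(id ⊗ (e·•q))` on `B ⊗ A`. -/
lemma piBpiB_core (x : A) (q : B) (t : B ⊗[k] A) :
    TensorProduct.map (piB k A B) (piB k A B)
        (TensorProduct.map (TensorProduct.mk k A B x) ((TensorProduct.mk k A B).flip q) t)
      = (Coalgebra.counit : A →ₗ[k] k) x •
          ((TensorProduct.mk k B B).flip q)
            ((TensorProduct.rid k B)
              (LinearMap.lTensor B (Coalgebra.counit : A →ₗ[k] k) t)) := by
  induction t using TensorProduct.induction_on with
  | zero => simp
  | tmul u v =>
      simp only [TensorProduct.map_tmul, TensorProduct.mk_apply, LinearMap.flip_apply,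
        piB_tmul, LinearMap.lTensor_tmul, TensorProduct.rid_tmul, TensorProduct.mk_apply]
      rw [TensorProduct.tmul_smul, ← TensorProduct.smul_tmul', ← TensorProduct.smul_tmul',
        smul_smul, smul_smul, mul_comm]
  | add u v hu hv => simp only [map_add, hu, hv, smul_add]

/-- `(π_B ⊗ π_B) ∘ Δ_{A⊗B} (a ⊗ b) = ε_A(a) • Δ_B(b)`. -/
lemma piBpiB_smashComul (τ : A ⊗[k] B →ₗ[k] B ⊗[k] A)
    (hτr : ∀ (x : A) (y : B),
      (TensorProduct.rid k B)
          ((LinearMap.lTensor B (Coalgebra.counit : A →ₗ[k] k)) (τ (x ⊗ₜ[k] y)))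
        = (Coalgebra.counit : A →ₗ[k] k) x • y)
    (a : A) (b : B) :
    TensorProduct.map (piB k A B) (piB k A B) (smashComul k A B τ (a ⊗ₜ[k] b))
      = (Coalgebra.counit : A →ₗ[k] k) a • (Coalgebra.comul : B →ₗ[k] B ⊗[k] B) b := by
  rw [smashComul_repr τ a b (Coalgebra.Repr.arbitrary k a) (Coalgebra.Repr.arbitrary k b)]
  rw [map_sum]
  set ra := Coalgebra.Repr.arbitrary k a
  set rb := Coalgebra.Repr.arbitrary k b
  have key : ∀ i ∈ ra.index,
      TensorProduct.map (piB k A B) (piB k A B)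
        (∑ j ∈ rb.index, TensorProduct.map (TensorProduct.mk k A B (ra.left i))
          ((TensorProduct.mk k A B).flip (rb.right j)) (τ (ra.right i ⊗ₜ[k] rb.left j)))
      = ((Coalgebra.counit : A →ₗ[k] k) (ra.left i)
          * (Coalgebra.counit : A →ₗ[k] k) (ra.right i)) •
          (Coalgebra.comul : B →ₗ[k] B ⊗[k] B) b := by
    intro i _
    rw [map_sum]
    have : ∀ j ∈ rb.index,
        TensorProduct.map (piB k A B) (piB k A B)
          (TensorProduct.map (TensorProduct.mk k A B (ra.left i))
            ((TensorProduct.mk k A B).flip (rb.right j)) (τ (ra.right i ⊗ₜ[k] rb.left j)))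
        = ((Coalgebra.counit : A →ₗ[k] k) (ra.left i)
            * (Coalgebra.counit : A →ₗ[k] k) (ra.right i)) •
            (rb.left j ⊗ₜ[k] rb.right j) := by
      intro j _
      rw [piBpiB_core, hτr]
      simp only [map_smul, LinearMap.flip_apply, TensorProduct.mk_apply]
      rw [smul_smul]
    rw [Finset.sum_congr rfl this, ← Finset.smul_sum, rb.eq]
  rw [Finset.sum_congr rfl key, ← Finset.sum_smul]
  congr 1
  -- ∑ ε(x_i) ε(y_i) = ε(a)
  have h1 : ∑ i ∈ ra.index,
      (Coalgebra.counit : A →ₗ[k] k) (ra.right i) • ra.left i = a := by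
    have h2 := congrArg (TensorProduct.rid k A) (Coalgebra.sum_tmul_counit_eq (R := k) ra)
    simp only [map_sum, TensorProduct.rid_tmul, one_smul] at h2
    exact h2
  calc ∑ i ∈ ra.index, (Coalgebra.counit : A →ₗ[k] k) (ra.left i)
        * (Coalgebra.counit : A →ₗ[k] k) (ra.right i)
      = (Coalgebra.counit : A →ₗ[k] k)
          (∑ i ∈ ra.index, (Coalgebra.counit : A →ₗ[k] k) (ra.right i) • ra.left i) := by
        rw [map_sum]; exact Finset.sum_congr rfl fun i _ => by
          rw [map_smul, smul_eq_mul, mul_comm]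
    _ = _ := by rw [h1]
end Helpers3
section Helpers4
variable {k : Type*} [Field k]
variable {A B : Type*}
  [Ring A] [Algebra k A] [Coalgebra k A]
  [Ring B] [Algebra k B] [Coalgebra k B]
  {σ : B ⊗[k] A →ₗ[k] A ⊗[k] B} {τ : A ⊗[k] B →ₗ[k] B ⊗[k] A}

lemma counit_one_one (hsb : IsSmashBiproduct k A B σ τ) :
    (Coalgebra.counit : A →ₗ[k] k) (1:A) * (Coalgebra.counit : B →ₗ[k] k) (1:B) = 1 := by
  have h := hsb.counit_one
  simpa [smashCounit, LinearMap.mul'_apply] using h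

lemma counitA_mul (hsb : IsSmashBiproduct k A B σ τ) (x y : A) :
    (Coalgebra.counit : A →ₗ[k] k) (x * y)
      = (Coalgebra.counit : B →ₗ[k] k) (1:B)
          * ((Coalgebra.counit : A →ₗ[k] k) x * (Coalgebra.counit : A →ₗ[k] k) y) := by
  have hf1 : (Coalgebra.counit : B →ₗ[k] k) (1:B) ≠ 0 :=
    right_ne_zero_of_mul_eq_one (counit_one_one hsb)
  have h := hsb.counit_mul (x ⊗ₜ[k] (1:B)) (y ⊗ₜ[k] (1:B))
  rw [smashMul_tmul, hsb.sigma_one_right] at h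
  simp only [TensorProduct.map_tmul, LinearMap.mulLeft_apply, LinearMap.mulRight_apply,
    one_mul, mul_one, smashCounit, LinearMap.coe_comp, Function.comp_apply,
    LinearMap.mul'_apply] at h
  apply mul_right_cancel₀ hf1
  rw [h]; ring

lemma counitB_mul (hsb : IsSmashBiproduct k A B σ τ) (x y : B) :
    (Coalgebra.counit : B →ₗ[k] k) (x * y)
      = (Coalgebra.counit : A →ₗ[k] k) (1:A)
          * ((Coalgebra.counit : B →ₗ[k] k) x * (Coalgebra.counit : B →ₗ[k] k) y) := by
  have he1 : (Coalgebra.counit : A →ₗ[k] k) (1:A) ≠ 0 :=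
    left_ne_zero_of_mul_eq_one (counit_one_one hsb)
  have h := hsb.counit_mul ((1:A) ⊗ₜ[k] x) ((1:A) ⊗ₜ[k] y)
  rw [smashMul_tmul, hsb.sigma_one_left] at h
  simp only [TensorProduct.map_tmul, LinearMap.mulLeft_apply, LinearMap.mulRight_apply,
    one_mul, mul_one, smashCounit, LinearMap.coe_comp, Function.comp_apply,
    LinearMap.mul'_apply] at h
  apply mul_left_cancel₀ he1
  rw [h]; ring

lemma comul_one_B (hsb : IsSmashBiproduct k A B σ τ) :
    (Coalgebra.comul : B →ₗ[k] B ⊗[k] B) (1:B)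
      = (Coalgebra.counit : A →ₗ[k] k) (1:A) • ((1:B) ⊗ₜ[k] (1:B)) := by
  have he1 : (Coalgebra.counit : A →ₗ[k] k) (1:A) ≠ 0 :=
    left_ne_zero_of_mul_eq_one (counit_one_one hsb)
  have h := congrArg (TensorProduct.map (piB k A B) (piB k A B)) hsb.comul_one
  rw [piBpiB_smashComul τ hsb.tau_counit_right] at h
  simp only [TensorProduct.map_tmul, piB_tmul] at h
  rw [TensorProduct.tmul_smul, ← TensorProduct.smul_tmul', smul_smul] at h
  apply smul_right_injective _ he1
  simp only [h, smul_smul]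
end Helpers4
section Helpers5
variable {k : Type*} [Field k]
variable {A : Type*} [Ring A] [Algebra k A] [Coalgebra k A]

lemma repr_counit_right_smul {a : A} {ι : Type*} (r : Coalgebra.Repr k a ι) :
    ∑ i ∈ r.index, (Coalgebra.counit : A →ₗ[k] k) (r.right i) • r.left i = a := by
  have h2 := congrArg (TensorProduct.rid k A) (Coalgebra.sum_tmul_counit_eq (R := k) r)
  simp only [map_sum, TensorProduct.rid_tmul, one_smul] at h2
  exact h2

lemma repr_counit_left_smul {a : A} {ι : Type*} (r : Coalgebra.Repr k a ι) :
    ∑ i ∈ r.index, (Coalgebra.counit : A →ₗ[k] k) (r.left i) • r.right i = a := by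
  have h2 := congrArg (TensorProduct.lid k A) (Coalgebra.sum_counit_tmul_eq (R := k) r)
  simp only [map_sum, TensorProduct.lid_tmul, one_smul] at h2
  exact h2
end Helpers5

/-- Identity (2): for a quasitriangular structure `R` of `A{_τ×_σ}B` with `σ` right
conormal, `Σ a_τ R¹ε_B(R²) ⊗ ε_A(R³)1_{Bτ}R⁴ = Σ R¹a_σ ε_B(R²_σ) ⊗ ε_A(R³)R⁴`. -/
theorem stmt12 (hsb : IsSmashBiproduct k A B σ τ)
    (hrc : RightConormal k A B σ)
    (R : (A ⊗[k] B) ⊗[k] (A ⊗[k] B))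
    (hqt : IsQT k (A ⊗[k] B) (smashMul k A B σ) (smashComul k A B τ)
      ((1:A) ⊗ₜ[k] (1:B)) (smashCounit k A B) R)
    (a : A)
    (ιR ι₁ ι₂ : Type) [Fintype ιR] [Fintype ι₁] [Fintype ι₂]
    (R1 : ιR → A) (R2 : ιR → B) (R3 : ιR → A) (R4 : ιR → B)
    (hR : R = ∑ ρ : ιR, (R1 ρ ⊗ₜ[k] R2 ρ) ⊗ₜ[k] (R3 ρ ⊗ₜ[k] R4 ρ))
    (bτ : ι₁ → B) (aτ : ι₁ → A)
    (hτ : τ (a ⊗ₜ[k] (1:B)) = ∑ t : ι₁, bτ t ⊗ₜ[k] aτ t)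
    (aσ : ιR → ι₂ → A) (bσ : ιR → ι₂ → B)
    (hσ : ∀ ρ, σ (R2 ρ ⊗ₜ[k] a) = ∑ n : ι₂, aσ ρ n ⊗ₜ[k] bσ ρ n) :
    ∑ t : ι₁, ∑ ρ : ιR,
        ((Coalgebra.counit : B →ₗ[k] k) (R2 ρ) * (Coalgebra.counit : A →ₗ[k] k) (R3 ρ)) •
          ((aτ t * R1 ρ) ⊗ₜ[k] (bτ t * R4 ρ))
      = ∑ ρ : ιR, ∑ n : ι₂,
          ((Coalgebra.counit : B →ₗ[k] k) (bσ ρ n) * (Coalgebra.counit : A →ₗ[k] k) (R3 ρ)) •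
            ((R1 ρ * aσ ρ n) ⊗ₜ[k] R4 ρ) := by
  classical
  obtain ⟨-, -, -, -, hqt4⟩ := hqt
  have h11 := counit_one_one hsb
  have hΔB1 := comul_one_B hsb
  have heA := counitA_mul hsb
  have hfB := counitB_mul hsb
  have hrc' : ∀ (b : B) (a' : A),
      piB k A B (σ (b ⊗ₜ[k] a')) = (Coalgebra.counit : A →ₗ[k] k) a' • b :=
    fun b a' => by simpa [piB] using hrc b a'
  set ra := Coalgebra.Repr.arbitrary k a with hradef
  let rb : Coalgebra.Repr k (1:B) (Fin 1) :=
    ⟨({0} : Finset (Fin 1)),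
      fun _ => ((Coalgebra.counit : A →ₗ[k] k) (1:A)) • (1:B),
      fun _ => (1:B), by
        rw [Finset.sum_singleton, hΔB1, TensorProduct.smul_tmul']⟩
  choose T hTe using fun i : (A × A) =>
    TensorProduct.exists_finset (R := k) (τ (ra.right i ⊗ₜ[k] (1:B)))
  -- explicit form of Δ(a ⊗ 1)
  have hΔ' : smashComul k A B τ (a ⊗ₜ[k] (1:B))
      = ∑ i ∈ ra.index, ∑ z ∈ T i, ((Coalgebra.counit : A →ₗ[k] k) (1:A)) •
          ((ra.left i ⊗ₜ[k] z.1) ⊗ₜ[k] (z.2 ⊗ₜ[k] (1:B))) := by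
    rw [smashComul_repr τ a (1:B) ra rb]
    refine Finset.sum_congr rfl fun i _ => ?_
    rw [Finset.sum_singleton]
    show TensorProduct.map _ _
        (τ (ra.right i ⊗ₜ[k] (((Coalgebra.counit : A →ₗ[k] k) (1:A)) • (1:B)))) = _
    rw [TensorProduct.tmul_smul, map_smul, map_smul, hTe i, map_sum, Finset.smul_sum]
    refine Finset.sum_congr rfl fun z _ => ?_
    refine congrArg _ ?_
    show TensorProduct.map (TensorProduct.mk k A B (ra.left i))
        ((TensorProduct.mk k A B).flip (1:B)) (z.1 ⊗ₜ[k] z.2) = _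
    simp
  -- ∑_z ε_B(z.1) ε_A(z.2) = ε_A(y_i) ε_B(1)
  have hz : ∀ i : (A × A), ∑ z ∈ T i,
      (Coalgebra.counit : B →ₗ[k] k) z.1 * (Coalgebra.counit : A →ₗ[k] k) z.2
      = (Coalgebra.counit : A →ₗ[k] k) (ra.right i) * (Coalgebra.counit : B →ₗ[k] k) (1:B) := by
    intro i
    have h2 := hsb.tau_counit_right (ra.right i) (1:B)
    rw [hTe i] at h2
    simp only [map_sum, LinearMap.lTensor_tmul, TensorProduct.rid_tmul] at h2
    have h3 := congrArg (Coalgebra.counit : B →ₗ[k] k) h2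
    simp only [map_sum, map_smul, smul_eq_mul] at h3
    rw [← h3]
    exact Finset.sum_congr rfl fun z _ => mul_comm _ _
  have hAr : ∑ i ∈ ra.index, (Coalgebra.counit : A →ₗ[k] k) (ra.right i) • ra.left i = a :=
    repr_counit_right_smul ra
  have hAl : ∑ i ∈ ra.index, (Coalgebra.counit : A →ₗ[k] k) (ra.left i) • ra.right i = a :=
    repr_counit_left_smul ra
  -- key equation from (QT4)
  have keyP := congrArg (TensorProduct.map (piA k A B) (piB k A B)) (hqt4 (a ⊗ₜ[k] (1:B)))
  -- ===================== LHS of QT4 =====================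
  have EqL : TensorProduct.map (piA k A B) (piB k A B)
      (mul2 k (A ⊗[k] B) (smashMul k A B σ) (R ⊗ₜ[k] smashComul k A B τ (a ⊗ₜ[k] (1:B))))
      = ∑ ρ : ιR, ∑ n : ι₂,
          ((Coalgebra.counit : B →ₗ[k] k) (bσ ρ n) * (Coalgebra.counit : A →ₗ[k] k) (R3 ρ)) •
            ((R1 ρ * aσ ρ n) ⊗ₜ[k] R4 ρ) := by
    calc (TensorProduct.map (piA k A B) (piB k A B)
        (mul2 k (A ⊗[k] B) (smashMul k A B σ) (R ⊗ₜ[k] smashComul k A B τ (a ⊗ₜ[k] (1:B)))))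
      _ = ∑ i ∈ ra.index, ∑ z ∈ T i,
            ((Coalgebra.counit : A →ₗ[k] k) (1:A)) • ∑ ρ : ιR,
            (piA k A B (TensorProduct.map (LinearMap.mulLeft k (R1 ρ))
                (LinearMap.mulRight k z.1) (σ (R2 ρ ⊗ₜ[k] ra.left i)))
              ⊗ₜ[k] piB k A B (TensorProduct.map (LinearMap.mulLeft k (R3 ρ))
                (LinearMap.mulRight k (1:B)) (σ (R4 ρ ⊗ₜ[k] z.2)))) := by
          rw [hΔ', hR]
          simp only [TensorProduct.sum_tmul, TensorProduct.tmul_sum, map_sum,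
            TensorProduct.tmul_smul, map_smul, mul2_tmul, smashMul_tmul,
            TensorProduct.map_tmul]
      _ = ∑ ρ : ιR, ∑ i ∈ ra.index, ∑ z ∈ T i,
            ((Coalgebra.counit : A →ₗ[k] k) (1:A)) •
            (piA k A B (TensorProduct.map (LinearMap.mulLeft k (R1 ρ))
                (LinearMap.mulRight k z.1) (σ (R2 ρ ⊗ₜ[k] ra.left i)))
              ⊗ₜ[k] piB k A B (TensorProduct.map (LinearMap.mulLeft k (R3 ρ))
                (LinearMap.mulRight k (1:B)) (σ (R4 ρ ⊗ₜ[k] z.2)))) := by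
          rw [Finset.sum_congr rfl fun i (_ : i ∈ ra.index) =>
            Finset.sum_congr rfl fun z (_ : z ∈ T i) => Finset.smul_sum]
          rw [Finset.sum_congr rfl fun i (_ : i ∈ ra.index) =>
            Finset.sum_comm]
          exact Finset.sum_comm
      _ = ∑ ρ : ιR, ∑ i ∈ ra.index, ∑ z ∈ T i,
            (((Coalgebra.counit : B →ₗ[k] k) z.1 * (Coalgebra.counit : A →ₗ[k] k) z.2)
              * ((Coalgebra.counit : A →ₗ[k] k) (1:A) * (Coalgebra.counit : A →ₗ[k] k) (1:A)
                  * (Coalgebra.counit : B →ₗ[k] k) (1:B)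
                  * (Coalgebra.counit : A →ₗ[k] k) (R3 ρ))) •
              ((R1 ρ * piA k A B (σ (R2 ρ ⊗ₜ[k] ra.left i))) ⊗ₜ[k] R4 ρ) := by
          refine Finset.sum_congr rfl fun ρ _ => Finset.sum_congr rfl fun i _ =>
            Finset.sum_congr rfl fun z _ => ?_
          rw [piA_map_mul hfB, piB_map_mul heA, hrc' (R4 ρ) z.2, mul_one,
            smul_smul, TensorProduct.tmul_smul, ← TensorProduct.smul_tmul',
            smul_smul, smul_smul]
          congr 1
          ring
      _ = ∑ ρ : ιR, ∑ i ∈ ra.index,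
            (((Coalgebra.counit : A →ₗ[k] k) (ra.right i) * (Coalgebra.counit : B →ₗ[k] k) (1:B))
              * ((Coalgebra.counit : A →ₗ[k] k) (1:A) * (Coalgebra.counit : A →ₗ[k] k) (1:A)
                  * (Coalgebra.counit : B →ₗ[k] k) (1:B)
                  * (Coalgebra.counit : A →ₗ[k] k) (R3 ρ))) •
              ((R1 ρ * piA k A B (σ (R2 ρ ⊗ₜ[k] ra.left i))) ⊗ₜ[k] R4 ρ) := by
          refine Finset.sum_congr rfl fun ρ _ => Finset.sum_congr rfl fun i _ => ?_
          rw [← hz i, Finset.sum_mul, ← Finset.sum_smul]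
      _ = ∑ ρ : ιR, ∑ i ∈ ra.index,
            ((Coalgebra.counit : A →ₗ[k] k) (ra.right i)) •
              ((Coalgebra.counit : A →ₗ[k] k) (R3 ρ) •
                ((R1 ρ * piA k A B (σ (R2 ρ ⊗ₜ[k] ra.left i))) ⊗ₜ[k] R4 ρ)) := by
          refine Finset.sum_congr rfl fun ρ _ => Finset.sum_congr rfl fun i _ => ?_
          rw [smul_smul]
          congr 1
          linear_combination ((Coalgebra.counit : A →ₗ[k] k) (ra.right i)
            * (Coalgebra.counit : A →ₗ[k] k) (R3 ρ)
            * ((Coalgebra.counit : A →ₗ[k] k) (1:A)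
                * (Coalgebra.counit : B →ₗ[k] k) (1:B) + 1)) * h11
      _ = ∑ ρ : ιR, (Coalgebra.counit : A →ₗ[k] k) (R3 ρ) •
            ((R1 ρ * piA k A B (σ (R2 ρ ⊗ₜ[k] a))) ⊗ₜ[k] R4 ρ) := by
          refine Finset.sum_congr rfl fun ρ _ => ?_
          rw [show ∑ i ∈ ra.index, ((Coalgebra.counit : A →ₗ[k] k) (ra.right i)) •
              ((Coalgebra.counit : A →ₗ[k] k) (R3 ρ) •
                ((R1 ρ * piA k A B (σ (R2 ρ ⊗ₜ[k] ra.left i))) ⊗ₜ[k] R4 ρ))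
            = ∑ i ∈ ra.index, ((Coalgebra.counit : A →ₗ[k] k) (R3 ρ)) •
              (((Coalgebra.counit : A →ₗ[k] k) (ra.right i)) •
                ((R1 ρ * piA k A B (σ (R2 ρ ⊗ₜ[k] ra.left i))) ⊗ₜ[k] R4 ρ))
            from Finset.sum_congr rfl fun i _ => smul_comm _ _ _]
          rw [← Finset.smul_sum]
          congr 1
          conv_rhs => rw [← hAr]
          rw [TensorProduct.tmul_sum, map_sum, map_sum, Finset.mul_sum,
            TensorProduct.sum_tmul]
          refine Finset.sum_congr rfl fun i _ => ?_
          rw [TensorProduct.tmul_smul, map_smul, map_smul, mul_smul_comm,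
            TensorProduct.smul_tmul']
      _ = ∑ ρ : ιR, ∑ n : ι₂,
            ((Coalgebra.counit : B →ₗ[k] k) (bσ ρ n) * (Coalgebra.counit : A →ₗ[k] k) (R3 ρ)) •
              ((R1 ρ * aσ ρ n) ⊗ₜ[k] R4 ρ) := by
          refine Finset.sum_congr rfl fun ρ _ => ?_
          rw [hσ ρ, map_sum]
          simp only [piA_tmul, Finset.mul_sum, mul_smul_comm, TensorProduct.sum_tmul,
            TensorProduct.smul_tmul', Finset.smul_sum]
          refine Finset.sum_congr rfl fun n _ => ?_
          rw [smul_smul, mul_comm]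
  -- ===================== RHS of QT4 =====================
  have hΔc : TensorProduct.comm k (A ⊗[k] B) (A ⊗[k] B) (smashComul k A B τ (a ⊗ₜ[k] (1:B)))
      = ∑ i ∈ ra.index, ∑ z ∈ T i, ((Coalgebra.counit : A →ₗ[k] k) (1:A)) •
          ((z.2 ⊗ₜ[k] (1:B)) ⊗ₜ[k] (ra.left i ⊗ₜ[k] z.1)) := by
    rw [hΔ']
    simp only [map_sum, map_smul, TensorProduct.comm_tmul]
  have EqR1 : TensorProduct.map (piA k A B) (piB k A B)
      (mul2 k (A ⊗[k] B) (smashMul k A B σ)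
        ((TensorProduct.comm k (A ⊗[k] B) (A ⊗[k] B) (smashComul k A B τ (a ⊗ₜ[k] (1:B))))
          ⊗ₜ[k] R))
      = ∑ ρ : ιR, ∑ i ∈ ra.index, ∑ z ∈ T i,
          (piA k A B (TensorProduct.map
              (LinearMap.mulLeft k (((Coalgebra.counit : A →ₗ[k] k) (1:A)) • z.2))
              (LinearMap.mulRight k (R2 ρ)) (σ ((1:B) ⊗ₜ[k] R1 ρ)))
            ⊗ₜ[k] piB k A B (TensorProduct.map (LinearMap.mulLeft k (ra.left i))
              (LinearMap.mulRight k (R4 ρ)) (σ (z.1 ⊗ₜ[k] R3 ρ)))) := by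
    rw [hΔc, hR]
    simp only [TensorProduct.sum_tmul, TensorProduct.tmul_sum, map_sum,
      TensorProduct.smul_tmul', map_smul, mul2_tmul, smashMul_tmul,
      TensorProduct.map_tmul]
  have EqR2 : ∑ ρ : ιR, ∑ i ∈ ra.index, ∑ z ∈ T i,
          (piA k A B (TensorProduct.map
              (LinearMap.mulLeft k (((Coalgebra.counit : A →ₗ[k] k) (1:A)) • z.2))
              (LinearMap.mulRight k (R2 ρ)) (σ ((1:B) ⊗ₜ[k] R1 ρ)))
            ⊗ₜ[k] piB k A B (TensorProduct.map (LinearMap.mulLeft k (ra.left i))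
              (LinearMap.mulRight k (R4 ρ)) (σ (z.1 ⊗ₜ[k] R3 ρ))))
      = ∑ ρ : ιR, ∑ i ∈ ra.index, ∑ z ∈ T i,
          ((Coalgebra.counit : B →ₗ[k] k) (R2 ρ) * (Coalgebra.counit : A →ₗ[k] k) (R3 ρ)) •
            (((Coalgebra.counit : A →ₗ[k] k) (ra.left i)) •
              ((z.2 * R1 ρ) ⊗ₜ[k] (z.1 * R4 ρ))) := by
    refine Finset.sum_congr rfl fun ρ _ => Finset.sum_congr rfl fun i _ =>
      Finset.sum_congr rfl fun z _ => ?_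
    rw [hsb.sigma_one_right (R1 ρ), TensorProduct.map_tmul]
    simp only [LinearMap.mulLeft_apply, LinearMap.mulRight_apply, one_mul]
    rw [piB_map_mul heA, hrc' z.1 (R3 ρ)]
    simp only [smul_mul_assoc, map_smul, piA_tmul, TensorProduct.tmul_smul,
      ← TensorProduct.smul_tmul', smul_smul]
    congr 1
    linear_combination ((Coalgebra.counit : B →ₗ[k] k) (R2 ρ)
      * (Coalgebra.counit : A →ₗ[k] k) (R3 ρ)
      * (Coalgebra.counit : A →ₗ[k] k) (ra.left i)) * h11
  have EqR3 : ∑ ρ : ιR, ∑ i ∈ ra.index, ∑ z ∈ T i,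
          ((Coalgebra.counit : B →ₗ[k] k) (R2 ρ) * (Coalgebra.counit : A →ₗ[k] k) (R3 ρ)) •
            (((Coalgebra.counit : A →ₗ[k] k) (ra.left i)) •
              ((z.2 * R1 ρ) ⊗ₜ[k] (z.1 * R4 ρ)))
      = ∑ ρ : ιR,
          ((Coalgebra.counit : B →ₗ[k] k) (R2 ρ) * (Coalgebra.counit : A →ₗ[k] k) (R3 ρ)) •
          (∑ i ∈ ra.index, ∑ z ∈ T i, ((Coalgebra.counit : A →ₗ[k] k) (ra.left i)) •
              ((z.2 * R1 ρ) ⊗ₜ[k] (z.1 * R4 ρ))) := by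
    refine Finset.sum_congr rfl fun ρ _ => ?_
    rw [Finset.smul_sum]
    exact Finset.sum_congr rfl fun i _ => Finset.smul_sum.symm
  have EqR4 : ∀ ρ : ιR,
      ∑ i ∈ ra.index, ∑ z ∈ T i, ((Coalgebra.counit : A →ₗ[k] k) (ra.left i)) •
          ((z.2 * R1 ρ) ⊗ₜ[k] (z.1 * R4 ρ))
      = ∑ t : ι₁, (aτ t * R1 ρ) ⊗ₜ[k] (bτ t * R4 ρ) := by
    intro ρ
    have hGz : ∀ i : (A × A), (∑ z ∈ T i, ((z.2 * R1 ρ) ⊗ₜ[k] (z.1 * R4 ρ)))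
        = (TensorProduct.map (LinearMap.mulRight k (R1 ρ)) (LinearMap.mulRight k (R4 ρ)))
            ((TensorProduct.comm k B A) (τ (ra.right i ⊗ₜ[k] (1:B)))) := by
      intro i
      rw [hTe i, map_sum, map_sum]
      exact Finset.sum_congr rfl fun z _ => by
        simp [TensorProduct.comm_tmul]
    calc (∑ i ∈ ra.index, ∑ z ∈ T i, ((Coalgebra.counit : A →ₗ[k] k) (ra.left i)) •
            ((z.2 * R1 ρ) ⊗ₜ[k] (z.1 * R4 ρ)))
      _ = ∑ i ∈ ra.index, ((Coalgebra.counit : A →ₗ[k] k) (ra.left i)) •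
            ((TensorProduct.map (LinearMap.mulRight k (R1 ρ)) (LinearMap.mulRight k (R4 ρ)))
              ((TensorProduct.comm k B A) (τ (ra.right i ⊗ₜ[k] (1:B))))) := by
          refine Finset.sum_congr rfl fun i _ => ?_
          rw [← Finset.smul_sum, hGz i]
      _ = (TensorProduct.map (LinearMap.mulRight k (R1 ρ)) (LinearMap.mulRight k (R4 ρ)))
            ((TensorProduct.comm k B A) (τ (a ⊗ₜ[k] (1:B)))) := by
          conv_rhs => rw [← hAl]
          rw [TensorProduct.sum_tmul, map_sum, map_sum, map_sum]
          refine Finset.sum_congr rfl fun i _ => ?_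
          rw [← TensorProduct.smul_tmul', map_smul, map_smul, map_smul]
      _ = ∑ t : ι₁, (aτ t * R1 ρ) ⊗ₜ[k] (bτ t * R4 ρ) := by
          rw [hτ, map_sum, map_sum]
          exact Finset.sum_congr rfl fun t _ => by
            simp [TensorProduct.comm_tmul]
  have EqR : TensorProduct.map (piA k A B) (piB k A B)
      (mul2 k (A ⊗[k] B) (smashMul k A B σ)
        ((TensorProduct.comm k (A ⊗[k] B) (A ⊗[k] B) (smashComul k A B τ (a ⊗ₜ[k] (1:B))))
          ⊗ₜ[k] R))
      = ∑ ρ : ιR, ∑ t : ι₁,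
          ((Coalgebra.counit : B →ₗ[k] k) (R2 ρ) * (Coalgebra.counit : A →ₗ[k] k) (R3 ρ)) •
            ((aτ t * R1 ρ) ⊗ₜ[k] (bτ t * R4 ρ)) := by
    rw [EqR1, EqR2, EqR3]
    refine Finset.sum_congr rfl fun ρ _ => ?_
    rw [EqR4 ρ, Finset.smul_sum]
  -- ===================== assemble =====================
  rw [Finset.sum_comm]
  rw [← EqR, ← keyP, EqL]

end
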